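/- Let γ be a non-geodesic unit-speed almost contact curve in a trans-Sasakian 3-manifold of type (α, β), with ∇_{γ'}γ' = -βξ + ϑφγ' and curvature κ = √(β² + ϑ²) > 0. Then the torsion of γ satisfies τ = |α + (βϑ' - β'ϑ)/κ²|, where ' denotes differentiation along γ. -/

import Mathlib

open scoped RealInnerProductSpace

lemma stmt_9_aux1 (k b c b' c' : ℝ) (hk : k ≠ 0) (h2 : k ^ 2 = b ^ 2 + c ^ 2) :
    (-b' * k - -b * ((2 * b * b' + 2 * c * c') / (2 * k))) / k ^ 2
      = c * (b * c' - b' * c) / k ^ 3 := by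
  field_simp
  linear_combination (-b') * h2

lemma stmt_9_aux2 (k b c b' c' : ℝ) (hk : k ≠ 0) (h2 : k ^ 2 = b ^ 2 + c ^ 2) :
    (c' * k - c * ((2 * b * b' + 2 * c * c') / (2 * k))) / k ^ 2
      = b * (b * c' - b' * c) / k ^ 3 := by
  field_simp
  linear_combination c' * h2

lemma stmt_9_aux3 (k b c x : ℝ) (hk : k ≠ 0) (h2 : k ^ 2 = b ^ 2 + c ^ 2) :
    (c / k * x) ^ 2 + (b / k * x) ^ 2 = x ^ 2 := by
  field_simp
  linear_combination (-x ^ 2) * h2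

/-- Let γ be a non-geodesic unit-speed almost contact curve in a trans-Sasakian
3-manifold of type (α, β), with ∇_{γ'}γ' = -βξ + ϑφγ' and curvature
κ = √(β² + ϑ²) > 0. Then the torsion satisfies τ = |α + (βϑ' - β'ϑ)/κ²|.

The tangent spaces along γ are modelled by a real inner product space `V` (the
metric g being the inner product); `D` is the covariant derivative along γ
(additive and satisfying the Leibniz rule); (T, N, B) is the Frenet frame, and
the hypotheses `hDξ`, `hDφT` encode the trans-Sasakian formulas for ∇_{γ'}ξ and
(∇_{γ'}φ)γ' along the curve. -/
theorem stmt_9 {V : Type*} [NormedAddCommGroup V] [InnerProductSpace ℝ V]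
    (φ : ℝ → V →ₗ[ℝ] V) (ξ T N B : ℝ → V) (η : ℝ → V →ₗ[ℝ] ℝ)
    (α β ϑ κ τ : ℝ → ℝ)
    (D : (ℝ → V) → (ℝ → V))
    -- covariant derivative along γ: additivity and Leibniz rule
    (hDadd : ∀ X Y : ℝ → V, D (X + Y) = D X + D Y)
    (hDsmul : ∀ (f : ℝ → ℝ) (X : ℝ → V) (s : ℝ), DifferentiableAt ℝ f s →
      D (fun t => f t • X t) s = deriv f s • X s + f s • D X s)
    -- almost contact metric structure along the curve
    (hφ : ∀ s : ℝ, ∀ X : V, φ s (φ s X) = -X + η s X • ξ s)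
    (hηξ : ∀ s : ℝ, η s (ξ s) = 1)
    (hg : ∀ s : ℝ, ∀ X Y : V, ⟪φ s X, φ s Y⟫ = ⟪X, Y⟫ - η s X * η s Y)
    -- γ is a unit-speed almost contact curve
    (hT : ∀ s : ℝ, ‖T s‖ = 1) (hleg : ∀ s : ℝ, η s (T s) = 0)
    -- trans-Sasakian covariant derivatives along γ: ∇_{γ'}ξ and ∇_{γ'}(φγ')
    (hDξ : ∀ s : ℝ, D ξ s = -(α s) • φ s (T s) + β s • (T s - η s (T s) • ξ s))
    (hDφT : ∀ s : ℝ, D (fun t => φ t (T t)) s =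
      ((α s * ⟪T s, T s⟫) • ξ s - (α s * η s (T s)) • T s)
      + ((β s * ⟪φ s (T s), T s⟫) • ξ s - (β s * η s (T s)) • φ s (T s))
      + φ s (D T s))
    -- curvature and the Frenet–Serret apparatus
    (hκ : ∀ s : ℝ, κ s = Real.sqrt (β s ^ 2 + ϑ s ^ 2))
    (hκpos : ∀ s : ℝ, 0 < κ s)
    (hDT : ∀ s : ℝ, D T s = κ s • N s)
    (hN : ∀ s : ℝ, N s = (-(β s) / κ s) • ξ s + (ϑ s / κ s) • φ s (T s))
    (hDN : ∀ s : ℝ, D N s = -(κ s) • T s + τ s • B s)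
    (hB : ∀ s : ℝ, ‖B s‖ = 1) (hτ : ∀ s : ℝ, 0 ≤ τ s)
    -- β and ϑ are differentiable along γ
    (hβ : Differentiable ℝ β) (hϑ : Differentiable ℝ ϑ) :
    ∀ s : ℝ, τ s = |α s + (β s * deriv ϑ s - deriv β s * ϑ s) / (κ s) ^ 2| := by
  -- pointwise algebraic consequences of the almost contact metric structure
  have hξne : ∀ t : ℝ, ξ t ≠ 0 := by
    intro t h
    have := hηξ t
    rw [h, map_zero] at this
    norm_num at this
  have hφξ : ∀ t : ℝ, φ t (ξ t) = 0 := by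
    intro t
    have h2 : φ t (φ t (ξ t)) = 0 := by rw [hφ, hηξ]; simp
    have h3 := (hφ t (φ t (ξ t))).symm
    rw [h2, map_zero, neg_add_eq_sub, sub_eq_zero] at h3
    set c := η t (φ t (ξ t)) with hcdef
    have h4 : φ t (ξ t) = c • ξ t := h3.symm
    have h5 := congrArg (φ t) h4
    rw [h2, map_smul, h4, smul_smul] at h5
    have hc : c = 0 := by
      rcases smul_eq_zero.mp h5.symm with h | h
      · exact mul_self_eq_zero.mp h
      · exact absurd h (hξne t)
    rw [h4, hc, zero_smul]
  have hgξ : ∀ t : ℝ, ∀ Y : V, ⟪ξ t, Y⟫ = η t Y := by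
    intro t Y
    have h := hg t (ξ t) Y
    rw [hφξ t, inner_zero_left, hηξ t] at h
    linarith
  have hηφ : ∀ t : ℝ, ∀ X : V, η t (φ t X) = 0 := by
    intro t X
    have h := hg t (φ t X) (φ t X)
    rw [hφ t X] at h
    have h2 := hg t X X
    have hξX : ⟪ξ t, X⟫ = η t X := hgξ t X
    have hXξ : ⟪X, ξ t⟫ = η t X := by rw [real_inner_comm]; exact hgξ t X
    have hξξ : ⟪ξ t, ξ t⟫ = 1 := by rw [hgξ, hηξ]
    simp only [inner_add_add_self, inner_neg_neg, real_inner_smul_left,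
      real_inner_smul_right, inner_neg_left, inner_neg_right, hξX, hXξ, hξξ] at h
    have hsq : η t (φ t X) * η t (φ t X) = 0 := by nlinarith [h, h2]
    exact mul_self_eq_zero.mp hsq
  have hφTT : ∀ t : ℝ, ⟪φ t (T t), T t⟫ = 0 := by
    intro t
    have h := hg t (φ t (T t)) (T t)
    rw [hφ t (T t), hleg t, hηφ t (T t)] at h
    simp only [inner_add_left, real_inner_smul_left, inner_neg_left, zero_smul,
      mul_zero, zero_mul, add_zero, sub_zero] at h
    rw [real_inner_comm] at h
    linarith
  -- curvature facts
  have hk2 : ∀ t, κ t ^ 2 = β t ^ 2 + ϑ t ^ 2 := fun t => by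
    rw [hκ]; exact Real.sq_sqrt (by positivity)
  have hkne : ∀ t, κ t ≠ 0 := fun t => (hκpos t).ne'
  intro s
  -- derivatives of the frame coefficients
  have hfne : β s ^ 2 + ϑ s ^ 2 ≠ 0 := by
    rw [← hk2 s]; exact pow_ne_zero 2 (hkne s)
  have hf : HasDerivAt (fun t => β t ^ 2 + ϑ t ^ 2)
      (2 * β s * deriv β s + 2 * ϑ s * deriv ϑ s) s := by
    have := (((hβ s).hasDerivAt.fun_pow 2).fun_add ((hϑ s).hasDerivAt.fun_pow 2))
    refine this.congr_deriv ?_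
    push_cast
    ring
  have hκfun : κ = fun t => Real.sqrt (β t ^ 2 + ϑ t ^ 2) := funext hκ
  have hκd : HasDerivAt κ
      ((2 * β s * deriv β s + 2 * ϑ s * deriv ϑ s) / (2 * κ s)) s := by
    rw [hκfun]
    exact hf.sqrt hfne
  have ha : HasDerivAt (fun t => -β t / κ t)
      ((-deriv β s * κ s - -β s * ((2 * β s * deriv β s + 2 * ϑ s * deriv ϑ s) / (2 * κ s))) / κ s ^ 2) s :=
    (hβ s).hasDerivAt.neg.div hκd (hkne s)
  have hb : HasDerivAt (fun t => ϑ t / κ t)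
      ((deriv ϑ s * κ s - ϑ s * ((2 * β s * deriv β s + 2 * ϑ s * deriv ϑ s) / (2 * κ s))) / κ s ^ 2) s :=
    (hϑ s).hasDerivAt.div hκd (hkne s)
  have hDa : deriv (fun t => -β t / κ t) s
      = ϑ s * (β s * deriv ϑ s - deriv β s * ϑ s) / κ s ^ 3 := by
    rw [ha.deriv]
    exact stmt_9_aux1 _ _ _ _ _ (hkne s) (hk2 s)
  have hDb : deriv (fun t => ϑ t / κ t) s
      = β s * (β s * deriv ϑ s - deriv β s * ϑ s) / κ s ^ 3 := by
    rw [hb.deriv]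
    exact stmt_9_aux2 _ _ _ _ _ (hkne s) (hk2 s)
  -- expand D N s using the Leibniz rule
  have hNfun : N = (fun t => (-β t / κ t) • ξ t) + (fun t => (ϑ t / κ t) • φ t (T t)) := by
    funext t
    simp only [Pi.add_apply]
    exact hN t
  have e1 : D N s = D (fun t => (-β t / κ t) • ξ t) s
      + D (fun t => (ϑ t / κ t) • φ t (T t)) s := by
    rw [hNfun, hDadd]
    rfl
  have e2 : D (fun t => (-β t / κ t) • ξ t) s
      = deriv (fun t => -β t / κ t) s • ξ s + (-β s / κ s) • D ξ s :=
    hDsmul _ _ s ha.differentiableAt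
  have e3 : D (fun t => (ϑ t / κ t) • φ t (T t)) s
      = deriv (fun t => ϑ t / κ t) s • φ s (T s) + (ϑ s / κ s) • D (fun t => φ t (T t)) s :=
    hDsmul _ _ s hb.differentiableAt
  have hφDT : φ s (D T s) = -(ϑ s) • T s := by
    rw [hDT s, map_smul, hN s, map_add, map_smul, map_smul, hφξ s, hφ s (T s), hleg s]
    match_scalars <;> (field_simp [hkne s]; try ring)
  have hTT : ⟪T s, T s⟫ = 1 := by
    rw [real_inner_self_eq_norm_sq, hT, one_pow]
  set L := α s + (β s * deriv ϑ s - deriv β s * ϑ s) / (κ s) ^ 2 with hLdef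
  have key : τ s • B s = (ϑ s / κ s * L) • ξ s + (β s / κ s * L) • φ s (T s) := by
    have h0 : τ s • B s = D N s + κ s • T s := by
      rw [hDN s]; module
    rw [h0, e1, e2, e3, hDξ s, hDφT s, hφDT, hDa, hDb, hleg s, hTT, hφTT s, hLdef]
    match_scalars
    · field_simp [hkne s]
      ring
    · field_simp [hkne s]
      ring
    · field_simp [hkne s]
      linear_combination hk2 s
  -- norms
  have hξξ : ⟪ξ s, ξ s⟫ = 1 := by rw [hgξ, hηξ]
  have hξφT : ⟪ξ s, φ s (T s)⟫ = 0 := by rw [hgξ, hηφ]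
  have hφTφT : ⟪φ s (T s), φ s (T s)⟫ = 1 := by
    rw [hg, hleg, hTT]; ring
  have hφTξ : ⟪φ s (T s), ξ s⟫ = 0 := by rw [real_inner_comm]; exact hξφT
  have hwn : ⟪(ϑ s / κ s * L) • ξ s + (β s / κ s * L) • φ s (T s),
      (ϑ s / κ s * L) • ξ s + (β s / κ s * L) • φ s (T s)⟫
      = (ϑ s / κ s * L) ^ 2 + (β s / κ s * L) ^ 2 := by
    simp only [inner_add_add_self, real_inner_smul_left, real_inner_smul_right,
      hξξ, hξφT, hφTξ, hφTφT]
    ring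
  have hτ2 : τ s ^ 2 = L ^ 2 := by
    have h1 : ‖τ s • B s‖ = τ s := by
      rw [norm_smul, hB s, mul_one, Real.norm_eq_abs, abs_of_nonneg (hτ s)]
    calc τ s ^ 2 = ‖τ s • B s‖ ^ 2 := by rw [h1]
      _ = ⟪τ s • B s, τ s • B s⟫ := (real_inner_self_eq_norm_sq _).symm
      _ = (ϑ s / κ s * L) ^ 2 + (β s / κ s * L) ^ 2 := by rw [key]; exact hwn
      _ = L ^ 2 := stmt_9_aux3 _ _ _ _ (hkne s) (hk2 s)
  calc τ s = Real.sqrt (τ s ^ 2) := (Real.sqrt_sq (hτ s)).symm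
    _ = Real.sqrt (L ^ 2) := by rw [hτ2]
    _ = |L| := Real.sqrt_sq_eq_abs L
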